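/- Fix n ∈ ℕ and an abelian group A. Consider the Δ-set 𝚫[n] × Γ whose m-simplices are the pairs (θ, τ) with θ : Fin (m+1) → Fin (n+1) monotone (non-decreasing) and τ ∈ Γ_m, with face maps ∂_i(θ, τ) = (θ ∘ δ_i, ∂_i τ), where δ_i : Fin m → Fin (m+1) is the strictly increasing map whose image omits i. Then: (1) for every m ≥ 1, every m-chain c of 𝚫[n] × Γ with coefficients in A satisfying ∂c = 0 is a boundary, i.e. c = ∂b for some (m+1)-chain b; (2) every 0-chain whose coefficients sum to 0 is the boundary of a 1-chain; moreover, for A = ℤ, the bounding chain b can be chosen with ‖b‖₁ = ‖c‖₁. -/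

import Mathlib

/-- `Γ n`: the set of `n`-simplices of the Δ-set `Δ[∞]`,
i.e. strictly increasing maps `Fin (n+1) → ℕ`. -/
def Gma (n : ℕ) : Type := {f : Fin (n + 1) → ℕ // StrictMono f}

/-- The `i`-th face map `∂ᵢ : Γ (n+1) → Γ n`, precomposition with the unique strictly
increasing map `Fin (n+1) → Fin (n+2)` omitting `i`. -/
def faceG {n : ℕ} (i : Fin (n + 2)) (τ : Gma (n + 1)) : Gma n :=
  ⟨fun j => τ.1 (i.succAbove j), τ.2.comp (Fin.strictMono_succAbove i)⟩

/-- A real-valued function is bounded. -/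
def IsBdd {X : Type*} (f : X → ℝ) : Prop := ∃ C : ℝ, ∀ x, |f x| ≤ C

/-- The `m`-simplices of the Δ-set `𝚫[n] × Γ`: pairs `(θ, τ)` with
`θ : Fin (m+1) → Fin (n+1)` monotone and `τ ∈ Γ_m`. -/
def DObj (n m : ℕ) : Type := (Fin (m + 1) →o Fin (n + 1)) × Gma m

/-- The `i`-th face map of `𝚫[n] × Γ`: `∂ᵢ(θ, τ) = (θ ∘ δᵢ, ∂ᵢ τ)`. -/
def faceD {n m : ℕ} (i : Fin (m + 2)) (p : DObj n (m + 1)) : DObj n m :=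
  (p.1.comp ⟨Fin.succAbove i, (Fin.strictMono_succAbove i).monotone⟩, faceG i p.2)

/-- The boundary operator on chains of `𝚫[n] × Γ` with coefficients in an abelian
group `A`: `∂c = ∑ᵢ (-1)ⁱ (∂ᵢ)_* c`. -/
noncomputable def bdryD (A : Type*) [AddCommGroup A] (n m : ℕ) (c : DObj n (m + 1) →₀ A) :
    DObj n m →₀ A :=
  ∑ i : Fin (m + 2), ((-1 : ℤ) ^ (i : ℕ)) • Finsupp.mapDomain (faceD i) c

/-- The ℓ¹-norm of a chain with integer coefficients. -/
def l1 {X : Type*} (c : X →₀ ℤ) : ℤ := ∑ x ∈ c.support, |c x|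

section Aux

lemma snoc_mono {m n : ℕ} (f : Fin (m+1) → Fin (n+1)) (hf : Monotone f) :
    Monotone (Fin.snoc f (Fin.last n)) := by
  rw [Fin.monotone_iff_le_succ]
  intro i
  induction i using Fin.lastCases with
  | last => simp [Fin.snoc_castSucc, Fin.le_last]
  | cast j =>
      rw [Fin.succ_castSucc]
      simp only [Fin.snoc_castSucc]
      exact hf j.castSucc_le_succ

lemma snoc_smono {m : ℕ} (f : Fin (m+1) → ℕ) (hf : StrictMono f) {a : ℕ}
    (ha : f (Fin.last m) < a) : StrictMono (Fin.snoc f a) := by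
  rw [Fin.strictMono_iff_lt_succ]
  intro i
  induction i using Fin.lastCases with
  | last => simpa using ha
  | cast j =>
      rw [Fin.succ_castSucc]
      simp only [Fin.snoc_castSucc]
      exact hf j.castSucc_lt_succ

variable {n : ℕ}

/-- cone vertex value -/
def cv (N : ℕ) {m : ℕ} (σ : DObj n m) : ℕ := max N (σ.2.1 (Fin.last m) + 1)

def coneMap (N : ℕ) {m : ℕ} (σ : DObj n m) : DObj n (m+1) :=
  (⟨Fin.snoc σ.1 (Fin.last n), snoc_mono _ σ.1.monotone⟩,
   ⟨Fin.snoc σ.2.1 (cv N σ), snoc_smono _ σ.2.2 (lt_of_lt_of_le (Nat.lt_succ_self _) (le_max_right _ _))⟩)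

lemma faceD_last_cone (N : ℕ) {m : ℕ} (σ : DObj n m) :
    faceD (Fin.last (m+1)) (coneMap N σ) = σ := by
  obtain ⟨θ, τ⟩ := σ
  unfold faceD coneMap faceG
  refine Prod.ext ?_ ?_
  · ext j
    simp [Fin.succAbove_last, Fin.snoc_castSucc, OrderHom.comp]
  · apply Subtype.ext
    funext j
    simp [Fin.succAbove_last, Fin.snoc_castSucc]

lemma snoc_succAbove {α : Type*} {m : ℕ} (f : Fin (m+2) → α) (a : α) (j : Fin (m+2)) (k : Fin (m+2)) :
    Fin.snoc (α := fun _ => α) f a ((Fin.castSucc j).succAbove k)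
      = Fin.snoc (α := fun _ => α) (fun i => f (j.succAbove i)) a k := by
  induction k using Fin.lastCases with
  | last =>
      rw [Fin.succAbove_castSucc_of_le _ _ (Fin.le_last j), Fin.succ_last]
      simp
  | cast k =>
      rw [Fin.castSucc_succAbove_castSucc]
      simp

lemma DObj.ext' {m : ℕ} {σ σ' : DObj n m} (h1 : ⇑σ.1 = ⇑σ'.1) (h2 : σ.2.1 = σ'.2.1) : σ = σ' := by
  obtain ⟨θ, τ⟩ := σ; obtain ⟨θ', τ'⟩ := σ'
  exact Prod.ext (OrderHom.ext _ _ h1) (Subtype.ext h2)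

lemma faceD_castSucc_cone (N : ℕ) {m : ℕ} (σ : DObj n (m+1)) (j : Fin (m+2))
    (hσ : σ.2.1 (Fin.last (m+1)) < N) :
    faceD (Fin.castSucc j) (coneMap N σ) = coneMap N (faceD j σ) := by
  have hcv : cv N σ = N := max_eq_left hσ
  have hle : σ.2.1 (j.succAbove (Fin.last m)) + 1 ≤ N := by
    have := σ.2.2.monotone (Fin.le_last (j.succAbove (Fin.last m)))
    omega
  have hcv2 : cv N (faceD j σ) = N := max_eq_left hle
  apply DObj.ext'
  · funext k
    exact snoc_succAbove (⇑σ.1) (Fin.last n) j k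
  · funext k
    show Fin.snoc (α := fun _ => ℕ) σ.2.1 (cv N σ) ((Fin.castSucc j).succAbove k)
      = Fin.snoc (α := fun _ => ℕ) (fun i => σ.2.1 (j.succAbove i)) (cv N (faceD j σ)) k
    rw [hcv, hcv2, snoc_succAbove]

variable {A : Type*} [AddCommGroup A]

lemma bdryD_smul (n m : ℕ) (z : ℤ) (c : DObj n (m + 1) →₀ A) :
    bdryD A n m (z • c) = z • bdryD A n m c := by
  unfold bdryD
  rw [Finset.smul_sum]
  refine Finset.sum_congr rfl fun i _ => ?_
  rw [Finsupp.mapDomain_smul, smul_comm]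

lemma coneMap_injective (N : ℕ) {m : ℕ} :
    Function.Injective (coneMap (n := n) N (m := m)) :=
  Function.LeftInverse.injective (g := faceD (Fin.last (m+1))) (faceD_last_cone N)

lemma mapDomain_const {X Y : Type*} (p : Y) (c : X →₀ A) :
    Finsupp.mapDomain (fun _ => p) c = Finsupp.single p (c.sum fun _ a => a) := by
  induction c using Finsupp.induction_linear with
  | zero => simp
  | add f g hf hg =>
      rw [Finsupp.mapDomain_add, hf, hg,
        Finsupp.sum_add_index' (fun _ => rfl) (fun _ _ _ => rfl), Finsupp.single_add]
  | single a b => rw [Finsupp.mapDomain_single, Finsupp.sum_single_index rfl]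

lemma l1_mapDomain {X Y : Type*} {f : X → Y} (hf : Function.Injective f) (c : X →₀ ℤ) :
    l1 (Finsupp.mapDomain f c) = l1 c := by
  classical
  unfold l1
  rw [Finsupp.mapDomain_support_of_injective hf, Finset.sum_image (fun a _ b _ h => hf h)]
  exact Finset.sum_congr rfl fun x _ => by rw [Finsupp.mapDomain_apply hf]

lemma l1_neg {X : Type*} (c : X →₀ ℤ) : l1 (-c) = l1 c := by
  unfold l1
  rw [Finsupp.support_neg]
  exact Finset.sum_congr rfl fun x _ => by simp

lemma l1_negonepow {X : Type*} (m : ℕ) (c : X →₀ ℤ) : l1 (((-1:ℤ)^m) • c) = l1 c := by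
  rcases Nat.even_or_odd m with h | h
  · rw [h.neg_one_pow, one_smul]
  · rw [h.neg_one_pow, neg_one_smul, l1_neg]

lemma bdry_cone (N : ℕ) (m : ℕ) (c : DObj n (m+1) →₀ A)
    (h : ∀ σ ∈ c.support, σ.2.1 (Fin.last (m+1)) < N) :
    bdryD A n (m+1) (Finsupp.mapDomain (coneMap N) c)
      = Finsupp.mapDomain (coneMap N) (bdryD A n m c) + ((-1:ℤ)^m) • c := by
  classical
  rw [bdryD, Fin.sum_univ_castSucc]
  congr 1
  · rw [bdryD, Finsupp.mapDomain_finset_sum]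
    refine Finset.sum_congr rfl fun j _ => ?_
    rw [Finsupp.mapDomain_smul, Fin.coe_castSucc,
      ← Finsupp.mapDomain_comp, ← Finsupp.mapDomain_comp]
    congr 1
    exact Finsupp.mapDomain_congr fun σ hσ => faceD_castSucc_cone N σ j (h σ hσ)
  · rw [← Finsupp.mapDomain_comp]
    have h2 : (faceD (Fin.last (m+2)) ∘ coneMap N) = (id : DObj n (m+1) → DObj n (m+1)) :=
      funext (faceD_last_cone N)
    rw [h2, Finsupp.mapDomain_id, Fin.val_last]
    congr 1
    rw [pow_add]
    norm_num

def pt (N : ℕ) : DObj n 0 :=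
  (⟨fun _ => Fin.last n, monotone_const⟩,
   ⟨fun _ => N, fun a b h => by have h1 : a.val < b.val := h; have h2 := b.isLt; omega⟩)

lemma faceD_zero_cone (N : ℕ) (σ : DObj n 0) (hσ : σ.2.1 (Fin.last 0) < N) :
    faceD 0 (coneMap N σ) = pt N := by
  have hsa : ∀ k : Fin 1, (0 : Fin 2).succAbove k = Fin.last 1 := by decide
  apply DObj.ext'
  · funext k
    show Fin.snoc (α := fun _ => Fin (n+1)) (⇑σ.1) (Fin.last n) ((0 : Fin 2).succAbove k)
      = Fin.last n
    rw [hsa k, Fin.snoc_last]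
  · funext k
    show Fin.snoc (α := fun _ => ℕ) σ.2.1 (cv N σ) ((0 : Fin 2).succAbove k) = N
    rw [hsa k, Fin.snoc_last]
    exact max_eq_left hσ

lemma bdry_cone0 (N : ℕ) (c : DObj n 0 →₀ A) (h : ∀ σ ∈ c.support, σ.2.1 (Fin.last 0) < N) :
    bdryD A n 0 (Finsupp.mapDomain (coneMap N) c)
      = Finsupp.single (pt N) (c.sum fun _ a => a) - c := by
  classical
  rw [bdryD, Fin.sum_univ_two, ← Finsupp.mapDomain_comp, ← Finsupp.mapDomain_comp]
  have h1 : (faceD (1 : Fin 2)) ∘ coneMap (n := n) N = id := funext fun σ => faceD_last_cone N σ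
  rw [h1, Finsupp.mapDomain_id,
    Finsupp.mapDomain_congr (f := faceD 0 ∘ coneMap N) (g := fun _ => pt N) (fun σ hσ => faceD_zero_cone N σ (h σ hσ)),
    mapDomain_const]
  simp only [Fin.val_zero, Fin.val_one, pow_zero, pow_one, one_smul, neg_one_zsmul]
  exact (sub_eq_add_neg _ _).symm

lemma key_pos (m : ℕ) (c : DObj n (m + 1) →₀ A) (hc : bdryD A n m c = 0) :
    ∃ N, bdryD A n (m + 1) (((-1:ℤ)^m) • Finsupp.mapDomain (coneMap N) c) = c := by
  classical
  set N := (c.support.sup fun σ => σ.2.1 (Fin.last (m+1))) + 1 with hN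
  refine ⟨N, ?_⟩
  have h : ∀ σ ∈ c.support, σ.2.1 (Fin.last (m+1)) < N :=
    fun σ hσ => Nat.lt_succ_of_le (Finset.le_sup (f := fun σ => σ.2.1 (Fin.last (m+1))) hσ)
  rw [bdryD_smul, bdry_cone N m c h, hc, Finsupp.mapDomain_zero, zero_add, smul_smul,
    ← pow_add, Even.neg_one_pow ⟨m, rfl⟩, one_smul]

lemma key_zero (c : DObj n 0 →₀ A) (hc : (c.sum fun _ a => a) = 0) :
    ∃ N, bdryD A n 0 (-(Finsupp.mapDomain (coneMap N) c)) = c := by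
  classical
  set N := (c.support.sup fun σ => σ.2.1 (Fin.last 0)) + 1 with hN
  refine ⟨N, ?_⟩
  have h : ∀ σ ∈ c.support, σ.2.1 (Fin.last 0) < N :=
    fun σ hσ => Nat.lt_succ_of_le (Finset.le_sup (f := fun σ => σ.2.1 (Fin.last 0)) hσ)
  rw [← neg_one_zsmul, bdryD_smul, bdry_cone0 N c h, hc, Finsupp.single_zero, zero_sub,
    neg_one_zsmul, neg_neg]

end Aux

/-- The Δ-set `𝚫[n] × Γ` is acyclic: every cycle of positive degree
(with coefficients in any abelian group `A`) is a boundary, every `0`-chain whose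
coefficients sum to `0` is a boundary; moreover for `A = ℤ` the bounding chain can be
chosen with the same ℓ¹-norm. -/
theorem acyclicity_of_simplex_times_gamma (A : Type*) [AddCommGroup A] (n : ℕ) :
    (∀ (m : ℕ) (c : DObj n (m + 1) →₀ A), bdryD A n m c = 0 →
      ∃ b : DObj n (m + 2) →₀ A, bdryD A n (m + 1) b = c) ∧
    (∀ c : DObj n 0 →₀ A, (c.sum fun _ a => a) = 0 →
      ∃ b : DObj n 1 →₀ A, bdryD A n 0 b = c) ∧
    (∀ (m : ℕ) (c : DObj n (m + 1) →₀ ℤ), bdryD ℤ n m c = 0 →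
      ∃ b : DObj n (m + 2) →₀ ℤ, bdryD ℤ n (m + 1) b = c ∧ l1 b = l1 c) ∧
    (∀ c : DObj n 0 →₀ ℤ, (c.sum fun _ a => a) = 0 →
      ∃ b : DObj n 1 →₀ ℤ, bdryD ℤ n 0 b = c ∧ l1 b = l1 c) := by
  refine ⟨?_, ?_, ?_, ?_⟩
  · intro m c hc
    obtain ⟨N, hb⟩ := key_pos m c hc
    exact ⟨_, hb⟩
  · intro c hc
    obtain ⟨N, hb⟩ := key_zero c hc
    exact ⟨_, hb⟩
  · intro m c hc
    obtain ⟨N, hb⟩ := key_pos m c hc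
    refine ⟨_, hb, ?_⟩
    rw [l1_negonepow, l1_mapDomain (coneMap_injective N)]
  · intro c hc
    obtain ⟨N, hb⟩ := key_zero c hc
    refine ⟨_, hb, ?_⟩
    rw [l1_neg, l1_mapDomain (coneMap_injective N)]
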